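/- A channel Λ on the bipartite system A × B is A↛B semicausal if and only if Tr_A ∘ Λ ∘ (D_A ⊗ id) = Tr_A ∘ Λ, i.e., if and only if for every state ρ on A × B one has Tr_A(Λ[(D_A ⊗ id)[ρ]]) = Tr_A(Λ[ρ]). -/

import Mathlib

open Matrix BigOperators
open scoped Kronecker ComplexOrder

noncomputable section

/-- Partial trace over the `A` factor. -/
def trA {A B : Type*} [Fintype A] (ρ : Matrix (A × B) (A × B) ℂ) : Matrix B B ℂ :=
  Matrix.of fun b b' => ∑ a, ρ (a, b) (a, b')

/-- Partial trace over the `B` factor. -/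
def trB {A B : Type*} [Fintype B] (ρ : Matrix (A × B) (A × B) ℂ) : Matrix A A ℂ :=
  Matrix.of fun a a' => ∑ b, ρ (a, b) (a', b)

/-- A state: positive semidefinite matrix of trace 1. -/
def IsState {n : Type*} [Fintype n] (ρ : Matrix n n ℂ) : Prop :=
  ρ.PosSemidef ∧ ρ.trace = 1

/-- A channel: a map admitting a Kraus representation `Λ[X] = ∑ i, K i * X * (K i)ᴴ`
with `∑ i, (K i)ᴴ * K i = 1` (completely positive and trace-preserving). -/
def IsChannel {n : Type*} [Fintype n] [DecidableEq n]
    (Λ : Matrix n n ℂ → Matrix n n ℂ) : Prop :=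
  ∃ (m : ℕ) (K : Fin m → Matrix n n ℂ),
    (∀ X, Λ X = ∑ i, K i * X * (K i)ᴴ) ∧ (∑ i, (K i)ᴴ * K i = 1)

/-- The induced map `Γ ⊗ id` on the bipartite system, acting blockwise. -/
def tensIdA {A B : Type*} (Γ : Matrix A A ℂ → Matrix A A ℂ)
    (ρ : Matrix (A × B) (A × B) ℂ) : Matrix (A × B) (A × B) ℂ :=
  Matrix.of fun p q => Γ (Matrix.of fun a a' => ρ (a, p.2) (a', q.2)) p.1 q.1

/-- The induced map `id ⊗ Γ` on the bipartite system, acting blockwise. -/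
def tensIdB {A B : Type*} (Γ : Matrix B B ℂ → Matrix B B ℂ)
    (ρ : Matrix (A × B) (A × B) ℂ) : Matrix (A × B) (A × B) ℂ :=
  Matrix.of fun p q => Γ (Matrix.of fun b b' => ρ (p.1, b) (q.1, b')) p.2 q.2

/-- `Λ` is A↛B semicausal: no channel applied by Alice beforehand affects Bob's
reduced output state. -/
def SemicausalAtoB {A B : Type*} [Fintype A] [Fintype B] [DecidableEq A]
    (Λ : Matrix (A × B) (A × B) ℂ → Matrix (A × B) (A × B) ℂ) : Prop :=
  ∀ ρ : Matrix (A × B) (A × B) ℂ, IsState ρ →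
    ∀ Γ : Matrix A A ℂ → Matrix A A ℂ, IsChannel Γ →
      trA (Λ (tensIdA Γ ρ)) = trA (Λ ρ)

/-- `Λ` is A↚B semicausal: no channel applied by Bob beforehand affects Alice's
reduced output state. -/
def SemicausalBtoA {A B : Type*} [Fintype A] [Fintype B] [DecidableEq B]
    (Λ : Matrix (A × B) (A × B) ℂ → Matrix (A × B) (A × B) ℂ) : Prop :=
  ∀ ρ : Matrix (A × B) (A × B) ℂ, IsState ρ →
    ∀ Γ : Matrix B B ℂ → Matrix B B ℂ, IsChannel Γ →
      trB (Λ (tensIdB Γ ρ)) = trB (Λ ρ)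

/-- `Λ` is causal: both A↛B and A↚B semicausal. -/
def Causal {A B : Type*} [Fintype A] [Fintype B] [DecidableEq A] [DecidableEq B]
    (Λ : Matrix (A × B) (A × B) ℂ → Matrix (A × B) (A × B) ℂ) : Prop :=
  SemicausalAtoB Λ ∧ SemicausalBtoA Λ

/-- The totally depolarizing channel `D[X] = Tr(X)·I/|A|`. -/
def depol {A : Type*} [Fintype A] [DecidableEq A] : Matrix A A ℂ → Matrix A A ℂ :=
  fun X => (X.trace / (Fintype.card A : ℂ)) • (1 : Matrix A A ℂ)

lemma channel_trace {n : Type*} [Fintype n] [DecidableEq n]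
    {Γ : Matrix n n ℂ → Matrix n n ℂ} (h : IsChannel Γ) (X : Matrix n n ℂ) :
    (Γ X).trace = X.trace := by
  obtain ⟨m, K, hK, hsum⟩ := h
  rw [hK, Matrix.trace_sum]
  have : ∀ i, (K i * X * (K i)ᴴ).trace = ((K i)ᴴ * K i * X).trace := by
    intro i
    rw [Matrix.trace_mul_cycle]
  simp_rw [this, ← Matrix.trace_sum, ← Finset.sum_mul, hsum, one_mul]

lemma depol_channel {A : Type*} [Fintype A] [DecidableEq A] [Nonempty A] :
    IsChannel (depol (A := A)) := by
  classical
  set c : ℂ := (((Real.sqrt (Fintype.card A))⁻¹ : ℝ) : ℂ) with hc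
  have hcard : (0 : ℝ) < Fintype.card A := by exact_mod_cast Fintype.card_pos
  have hc2 : c * c = (Fintype.card A : ℂ)⁻¹ := by
    rw [hc, ← Complex.ofReal_mul, ← mul_inv, Real.mul_self_sqrt hcard.le]
    push_cast
    ring
  have hcstar : (starRingEnd ℂ) c = c := Complex.conj_ofReal _
  let e := (Fintype.equivFin (A × A)).symm
  have key1 : ∀ X : Matrix A A ℂ, depol X =
      ∑ p : A × A, (c • Matrix.single p.1 p.2 (1:ℂ)) * X *
        (c • Matrix.single p.1 p.2 (1:ℂ))ᴴ := by
    intro X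
    ext a a'
    simp only [depol, Matrix.smul_apply, Matrix.one_apply, Matrix.sum_apply,
      Matrix.conjTranspose_smul, Matrix.mul_apply, Matrix.conjTranspose_apply,
      Matrix.single, Matrix.of_apply, smul_eq_mul, Fintype.sum_prod_type,
      mul_ite, ite_mul, one_mul, mul_one, zero_mul, mul_zero, _root_.map_one, _root_.map_zero, _root_.map_mul,
      Finset.sum_ite_eq, Finset.sum_ite_eq', Finset.mem_univ, if_true, hcstar,
      Finset.sum_ite_irrel, Finset.sum_const_zero, Finset.mul_sum, Finset.sum_mul]
    simp only [apply_ite (star : ℂ → ℂ), star_one, star_zero, mul_ite, mul_zero, mul_one,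
      ite_and, Finset.sum_ite_irrel, Finset.sum_ite_eq, Finset.sum_ite_eq',
      Finset.mem_univ, if_true, Finset.sum_const_zero]
    by_cases h : a = a'
    · simp [h, Matrix.trace, Matrix.diag, Complex.star_def, hcstar, ← Finset.sum_mul,
        ← Finset.mul_sum]
      rw [div_eq_mul_inv, ← hc2]; ring
    · simp [h, Complex.star_def, hcstar]
  have key2 : ∑ p : A × A, (c • Matrix.single p.1 p.2 (1:ℂ))ᴴ *
      (c • Matrix.single p.1 p.2 (1:ℂ)) = 1 := by
    ext a a'
    simp only [Matrix.sum_apply, Matrix.conjTranspose_smul, Matrix.mul_apply,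
      Matrix.conjTranspose_apply, Matrix.single, Matrix.of_apply, Matrix.smul_apply,
      smul_eq_mul, Matrix.one_apply, Fintype.sum_prod_type, mul_ite, ite_mul, one_mul, mul_one,
      zero_mul, mul_zero, _root_.map_one, _root_.map_zero, hcstar, Finset.sum_ite_eq, Finset.sum_ite_eq',
      Finset.mem_univ, if_true, Finset.sum_ite_irrel, Finset.sum_const_zero]
    simp only [ite_and, Finset.sum_ite_irrel, Finset.sum_ite_eq, Finset.sum_ite_eq',
      Finset.mem_univ, if_true, Finset.sum_const_zero, ite_self]
    by_cases h : a = a'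
    · simp only [h, if_true, Complex.star_def, hcstar, hc2, Finset.sum_const,
        Finset.card_univ, nsmul_eq_mul]
      have : ((Fintype.card A : ℂ)) ≠ 0 := by exact_mod_cast hcard.ne'
      rw [_root_.map_one, mul_one, hc2]; field_simp
    · simp [h, Ne.symm h, imp_false]
  exact ⟨_, fun i => c • Matrix.single (e i).1 (e i).2 (1:ℂ),
    fun X => (key1 X).trans (Equiv.sum_comp e _).symm,
    (Equiv.sum_comp e _).trans key2⟩

lemma psd_sum {n ι : Type*} [Fintype n] (s : Finset ι) (f : ι → Matrix n n ℂ)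
    (h : ∀ i ∈ s, (f i).PosSemidef) : (∑ i ∈ s, f i).PosSemidef := by
  classical
  induction s using Finset.induction with
  | empty => simpa using Matrix.PosSemidef.zero
  | insert x s hx ih =>
      rw [Finset.sum_insert hx]
      exact (h _ (Finset.mem_insert_self _ _)).add
        (ih fun i hi => h i (Finset.mem_insert_of_mem hi))

lemma tensIdA_kraus {A B : Type*} [Fintype A] [Fintype B] [DecidableEq A] [DecidableEq B]
    (Γ : Matrix A A ℂ → Matrix A A ℂ) {m : ℕ} (K : Fin m → Matrix A A ℂ)
    (hK : ∀ X, Γ X = ∑ i, K i * X * (K i)ᴴ) (ρ : Matrix (A × B) (A × B) ℂ) :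
    tensIdA Γ ρ = ∑ i, (K i ⊗ₖ (1 : Matrix B B ℂ)) * ρ * ((K i ⊗ₖ (1 : Matrix B B ℂ)))ᴴ := by
  ext ⟨a, b⟩ ⟨a', b'⟩
  simp only [tensIdA, Matrix.of_apply, hK, Matrix.sum_apply, Matrix.mul_apply,
    Matrix.conjTranspose_apply, Matrix.kroneckerMap_apply, Matrix.one_apply,
    Fintype.sum_prod_type, mul_ite, ite_mul, mul_zero, zero_mul, mul_one, one_mul,
    _root_.map_one, _root_.map_zero, apply_ite (star : ℂ → ℂ), star_one, star_zero,
    Finset.sum_ite_irrel, Finset.sum_ite_eq, Finset.sum_ite_eq', Finset.mem_univ, if_true,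
    Finset.sum_const_zero, star_mul']

lemma tensIdA_state {A B : Type*} [Fintype A] [Fintype B] [DecidableEq A] [DecidableEq B]
    {Γ : Matrix A A ℂ → Matrix A A ℂ} (hΓ : IsChannel Γ)
    {ρ : Matrix (A × B) (A × B) ℂ} (hρ : IsState ρ) : IsState (tensIdA Γ ρ) := by
  obtain ⟨m, K, hK, hsum⟩ := hΓ
  constructor
  · rw [tensIdA_kraus Γ K hK ρ]
    exact psd_sum _ _ fun i _ => hρ.1.mul_mul_conjTranspose_same _
  · have : (tensIdA Γ ρ).trace = ρ.trace := by
      simp only [Matrix.trace, Matrix.diag, tensIdA, Matrix.of_apply, Fintype.sum_prod_type]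
      rw [Finset.sum_comm]
      have hstep : ∀ b : B, ∑ a : A, Γ (Matrix.of fun a a' => ρ (a, b) (a', b)) a a
          = ∑ a : A, ρ (a, b) (a, b) := by
        intro b
        have := channel_trace ⟨m, K, hK, hsum⟩ (Matrix.of fun a a' => ρ (a, b) (a', b))
        simpa [Matrix.trace, Matrix.diag] using this
      rw [Finset.sum_congr rfl fun b _ => hstep b, Finset.sum_comm]
    rw [this, hρ.2]

lemma tensIdA_depol_comp {A B : Type*} [Fintype A] [Fintype B] [DecidableEq A]
    {Γ : Matrix A A ℂ → Matrix A A ℂ} (hΓ : IsChannel Γ)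
    (ρ : Matrix (A × B) (A × B) ℂ) :
    tensIdA depol (tensIdA Γ ρ) = tensIdA depol ρ := by
  ext p q
  simp only [tensIdA, Matrix.of_apply]
  rw [show (Matrix.of fun a a' => Γ (Matrix.of fun c c' => ρ (c, p.2) (c', q.2)) a a')
      = Γ (Matrix.of fun c c' => ρ (c, p.2) (c', q.2)) from rfl]
  simp only [depol, Matrix.smul_apply, smul_eq_mul]
  rw [channel_trace hΓ]

/-- a channel is A↛B semicausal iff `Tr_A ∘ Λ ∘ (D_A ⊗ id) = Tr_A ∘ Λ`
on states. -/
theorem stmt_2 {A B : Type*} [Fintype A] [Fintype B] [DecidableEq A] [DecidableEq B]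
    [Nonempty A] [Nonempty B]
    (Λ : Matrix (A × B) (A × B) ℂ → Matrix (A × B) (A × B) ℂ) (hΛ : IsChannel Λ) :
    SemicausalAtoB Λ ↔
      ∀ ρ : Matrix (A × B) (A × B) ℂ, IsState ρ →
        trA (Λ (tensIdA depol ρ)) = trA (Λ ρ) := by
  constructor
  · intro h ρ hρ
    exact h ρ hρ depol depol_channel
  · intro h ρ hρ Γ hΓ
    have h1 := h ρ hρ
    have h2 := h (tensIdA Γ ρ) (tensIdA_state hΓ hρ)
    rw [tensIdA_depol_comp hΓ ρ] at h2
    exact h2.symm.trans h1
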